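/- Let ν be a finite Borel measure on ℝ such that the lower density D̲(ν,x) = liminf_{r→0} ν(B_r(x))/(2r) satisfies ∫ D̲(ν,x) dν(x) < ∞. Then ν is absolutely continuous with respect to Lebesgue measure, its density D(ν,x) = lim_{r↓0} ν(B_r(x))/(2r) exists Lebesgue-a.e. on the support, equals the Radon–Nikodym derivative dν/dLeb a.e., and ∫ |dν/dLeb|² dLeb = ∫ D̲(ν,x) dν(x). -/

import Mathlib

open MeasureTheory Filter Metric Set
open scoped ENNReal NNReal

namespace Stmt5Aux

noncomputable def F (ν : Measure ℝ) (x r : ℝ) : ℝ≥0∞ :=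
  ν (Metric.ball x r) / ENNReal.ofReal (2 * r)

noncomputable def g (ν : Measure ℝ) (x : ℝ) : ℝ≥0∞ :=
  liminf (fun r : ℝ => F ν x r) (nhdsWithin 0 (Set.Ioi 0))

noncomputable def h (ν : Measure ℝ) (x : ℝ) : ℝ≥0∞ :=
  ⨆ n : ℕ, ⨅ (q : ℚ) (_ : (q : ℝ) ∈ Ioo (0:ℝ) (1 / (n + 1))),
    ν (Metric.ball x ((q : ℝ) / 2)) / ENNReal.ofReal (2 * (q : ℝ))

lemma measurable_ballMeas (ν : Measure ℝ) [IsFiniteMeasure ν] (q : ℝ) :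
    Measurable fun x => ν (Metric.ball x q) := by
  have hs : MeasurableSet {p : ℝ × ℝ | dist p.2 p.1 < q} :=
    (isOpen_lt (continuous_snd.dist continuous_fst) continuous_const).measurableSet
  have heq : ∀ x : ℝ, Prod.mk x ⁻¹' {p : ℝ × ℝ | dist p.2 p.1 < q} = Metric.ball x q := by
    intro x; ext y; simp [Metric.mem_ball]
  simpa [heq] using measurable_measure_prodMk_left (ν := ν) hs

lemma measurable_h (ν : Measure ℝ) [IsFiniteMeasure ν] : Measurable (h ν) := by
  refine Measurable.iSup fun n => Measurable.iInf fun q => Measurable.iInf fun _ => ?_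
  exact (measurable_ballMeas ν _).div measurable_const

lemma g_eq (ν : Measure ℝ) (x : ℝ) :
    g ν x = ⨆ (δ : ℝ) (_ : 0 < δ), ⨅ r ∈ Ioo (0:ℝ) δ, F ν x r :=
  (nhdsGT_basis (0:ℝ)).liminf_eq_iSup_iInf

lemma h_le_g (ν : Measure ℝ) (x : ℝ) : h ν x ≤ g ν x := by
  rw [g_eq]
  refine iSup_le fun n => ?_
  have hδ : (0:ℝ) < 1 / (2 * (n + 1)) := by positivity
  refine le_trans ?_ (le_iSup₂ (f := fun (δ:ℝ) (_ : 0 < δ) => ⨅ r ∈ Ioo (0:ℝ) δ, F ν x r)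
    (1 / (2 * ((n:ℝ) + 1))) hδ)
  refine le_iInf₂ fun r hr => ?_
  obtain ⟨q, hq1, hq2⟩ := exists_rat_btwn (show r < min (2 * r) (1 / ((n:ℝ)+1)) by
    rcases hr with ⟨hr0, hrδ⟩
    refine lt_min (by linarith) ?_
    calc r < 1 / (2 * ((n:ℝ) + 1)) := hrδ
      _ < 1 / ((n:ℝ)+1) := by
        apply div_lt_div_of_pos_left one_pos (by positivity) (by nlinarith [Nat.cast_nonneg (α := ℝ) n]))
  have hq0 : (0:ℝ) < q := lt_trans hr.1 hq1
  have hqmem : (q : ℝ) ∈ Ioo (0:ℝ) (1 / ((n:ℝ)+1)) := ⟨hq0, hq2.trans_le (min_le_right _ _)⟩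
  refine le_trans (iInf₂_le q hqmem) ?_
  apply ENNReal.div_le_div
  · exact measure_mono (Metric.ball_subset_ball (by
      have := hq2.trans_le (min_le_left _ _); linarith))
  · exact ENNReal.ofReal_le_ofReal (by linarith)

lemma div_two_le (a : ℝ≥0∞) (q : ℝ) (hq : 0 < q) :
    a / ENNReal.ofReal q / 2 ≤ a / ENNReal.ofReal (2 * q) := by
  have hb0 : ENNReal.ofReal q ≠ 0 := by simp [hq, ENNReal.ofReal_eq_zero, not_le]
  have hbt : ENNReal.ofReal q ≠ ⊤ := ENNReal.ofReal_ne_top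
  rw [ENNReal.ofReal_mul (by norm_num : (0:ℝ) ≤ 2)]
  rw [div_eq_mul_inv, div_eq_mul_inv, div_eq_mul_inv,
    ENNReal.mul_inv (Or.inr hbt) (Or.inr hb0)]
  have : ENNReal.ofReal 2 = 2 := by norm_num
  rw [this]
  ring_nf
  exact le_rfl

lemma g_le_two_h (ν : Measure ℝ) (x : ℝ) : g ν x ≤ 2 * h ν x := by
  rw [g_eq]
  refine iSup₂_le fun δ hδ => ?_
  obtain ⟨n, hn⟩ := exists_nat_one_div_lt hδ
  have key : (⨅ r ∈ Ioo (0:ℝ) δ, F ν x r) / 2 ≤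
      ⨅ (q : ℚ) (_ : (q : ℝ) ∈ Ioo (0:ℝ) (1 / (n + 1))),
        ν (Metric.ball x ((q : ℝ) / 2)) / ENNReal.ofReal (2 * (q : ℝ)) := by
    refine le_iInf₂ fun q hq => ?_
    have hq0 : (0:ℝ) < q := hq.1
    have hmem : (q : ℝ) / 2 ∈ Ioo (0:ℝ) δ := by
      constructor
      · linarith
      · have := hq.2.trans hn; linarith
    have h1 : (⨅ r ∈ Ioo (0:ℝ) δ, F ν x r) ≤ F ν x ((q:ℝ)/2) := iInf₂_le _ hmem
    refine le_trans (ENNReal.div_le_div h1 le_rfl) ?_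
    have : F ν x ((q:ℝ)/2) = ν (Metric.ball x ((q:ℝ)/2)) / ENNReal.ofReal (q:ℝ) := by
      have h2q : (2 : ℝ) * ((q:ℝ)/2) = q := by ring
      simp [F, h2q]
    rw [this]
    exact div_two_le _ _ hq0
  have h2 : (⨅ (q : ℚ) (_ : (q : ℝ) ∈ Ioo (0:ℝ) (1 / (n + 1))),
        ν (Metric.ball x ((q : ℝ) / 2)) / ENNReal.ofReal (2 * (q : ℝ))) ≤ h ν x :=
    le_iSup (f := fun n : ℕ => ⨅ (q : ℚ) (_ : (q : ℝ) ∈ Ioo (0:ℝ) (1 / (n + 1))),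
        ν (Metric.ball x ((q : ℝ) / 2)) / ENNReal.ofReal (2 * (q : ℝ))) n
  have := le_trans key h2
  rwa [ENNReal.div_le_iff_le_mul (Or.inl two_ne_zero) (Or.inl ENNReal.ofNat_ne_top),
    mul_comm] at this


lemma freq (ν : Measure ℝ) [IsFiniteMeasure ν] (x : ℝ) (c : ℝ≥0∞)
    (hc : g ν x < c) (δ : ℝ) (hδ : 0 < δ) :
    ∃ s ∈ Ioo (0:ℝ) δ, ν (Metric.closedBall x s) ≤ 2 * c * ENNReal.ofReal (2 * s) := by
  have hfreq : ∃ᶠ r in nhdsWithin 0 (Set.Ioi 0), F ν x r < c :=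
    frequently_lt_of_liminf_lt (by isBoundedDefault) hc
  rw [(nhdsGT_basis (0:ℝ)).frequently_iff] at hfreq
  obtain ⟨r, hr, hFr⟩ := hfreq δ hδ
  have hr0 := hr.1
  refine ⟨r / 2, ⟨by linarith, by linarith [hr.2]⟩, ?_⟩
  have h0 : ENNReal.ofReal (2 * r) ≠ 0 := by
    simp [ENNReal.ofReal_eq_zero, not_le]; linarith
  have h1 : ν (Metric.closedBall x (r / 2)) ≤ ν (Metric.ball x r) :=
    measure_mono (Metric.closedBall_subset_ball (by linarith))
  have h2 : ν (Metric.ball x r) ≤ c * ENNReal.ofReal (2 * r) := by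
    rw [F, ENNReal.div_lt_iff (Or.inl h0) (Or.inl ENNReal.ofReal_ne_top)] at hFr
    exact hFr.le
  refine h1.trans (h2.trans ?_)
  have : (2 : ℝ) * r = 2 * (2 * (r / 2)) := by ring
  rw [this, ENNReal.ofReal_mul (by norm_num : (0:ℝ) ≤ 2)]
  have h2' : ENNReal.ofReal 2 = 2 := by norm_num
  rw [h2', ← mul_assoc, mul_comm c 2]

lemma abs_aux (ν : Measure ℝ) [IsFiniteMeasure ν] (A : Set ℝ) (hA : volume A = 0)
    (C : ℝ≥0∞) (hC : C ≠ ⊤)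
    (hcov : ∀ x ∈ A, ∀ δ : ℝ, 0 < δ →
      ∃ s ∈ Ioo (0:ℝ) δ, ν (Metric.closedBall x s) ≤ C * ENNReal.ofReal (2 * s)) :
    ν A = 0 := by
  refine le_antisymm ?_ zero_le
  refine ENNReal.le_of_forall_pos_le_add fun ε hε _ => ?_
  have hε' : (ε : ℝ≥0∞) / (C + 1) ≠ 0 := by
    simp only [ne_eq, ENNReal.div_eq_zero_iff, not_or]
    exact ⟨by exact_mod_cast hε.ne', by simp [hC]⟩
  obtain ⟨t, r, t_count, t_sub, hr, hA_sub, hsum⟩ :=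
    Besicovitch.exists_closedBall_covering_tsum_measure_le (volume : Measure ℝ) hε'
      (fun x => {s : ℝ | 0 < s ∧ ν (Metric.closedBall x s) ≤ C * ENNReal.ofReal (2 * s)})
      A (fun x hx δ hδ => by
        obtain ⟨s, hs, hb⟩ := hcov x hx δ hδ
        exact ⟨s, ⟨hs.1, hb⟩, hs⟩)
  have step : ν A ≤ C * ((ε : ℝ≥0∞) / (C + 1)) := by
    calc ν A ≤ ν (⋃ x ∈ t, Metric.closedBall x (r x)) := measure_mono hA_sub
      _ ≤ ∑' x : t, ν (Metric.closedBall x (r x)) := measure_biUnion_le ν t_count _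
      _ ≤ ∑' x : t, C * volume (Metric.closedBall (x : ℝ) (r x)) := by
          refine ENNReal.tsum_le_tsum fun x => ?_
          rw [Real.volume_closedBall]
          exact (hr x x.2).2
      _ = C * ∑' x : t, volume (Metric.closedBall (x : ℝ) (r x)) := ENNReal.tsum_mul_left
      _ ≤ C * (volume A + (ε : ℝ≥0∞) / (C + 1)) := by gcongr
      _ = C * ((ε : ℝ≥0∞) / (C + 1)) := by rw [hA, zero_add]
  refine step.trans ?_
  rw [zero_add]
  calc C * ((ε : ℝ≥0∞) / (C + 1)) ≤ (C + 1) * ((ε : ℝ≥0∞) / (C + 1)) := by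
        gcongr; exact le_self_add
    _ ≤ (ε : ℝ≥0∞) := ENNReal.mul_div_le


lemma ac (ν : Measure ℝ) [IsFiniteMeasure ν] (hint : ∫⁻ x, g ν x ∂ν ≠ ⊤) :
    ν ≪ volume := by
  have hinth : ∫⁻ x, h ν x ∂ν ≠ ⊤ :=
    ne_top_of_le_ne_top hint (lintegral_mono fun x => h_le_g ν x)
  have hae : ν {x | h ν x = ⊤} = 0 := by
    have := ae_lt_top (measurable_h ν) hinth
    rw [ae_iff] at this
    simpa [not_lt, top_le_iff] using this
  intro A hA
  have key : ∀ n : ℕ, ν (A ∩ {x | h ν x < n}) = 0 := by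
    intro n
    refine abs_aux ν _ (measure_mono_null Set.inter_subset_left hA)
      (2 * (2 * n)) (by simp [ENNReal.mul_eq_top]) fun x hx δ hδ => ?_
    have hgx : g ν x < 2 * n := by
      calc g ν x ≤ 2 * h ν x := g_le_two_h ν x
        _ < 2 * n := by
          rw [ENNReal.mul_lt_mul_iff_right two_ne_zero ENNReal.ofNat_ne_top]
          exact hx.2
    exact freq ν x (2 * n) hgx δ hδ
  have hsub : A ⊆ (⋃ n : ℕ, A ∩ {x | h ν x < n}) ∪ {x | h ν x = ⊤} := by
    intro x hx
    by_cases hx' : h ν x = ⊤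
    · exact Or.inr hx'
    · obtain ⟨n, hn⟩ := ENNReal.exists_nat_gt hx'
      exact Or.inl (Set.mem_iUnion.2 ⟨n, hx, hn⟩)
  refine le_antisymm ?_ zero_le
  calc ν A ≤ ν ((⋃ n : ℕ, A ∩ {x | h ν x < n}) ∪ {x | h ν x = ⊤}) := measure_mono hsub
    _ ≤ ν (⋃ n : ℕ, A ∩ {x | h ν x < n}) + ν {x | h ν x = ⊤} := measure_union_le _ _
    _ ≤ (∑' n : ℕ, ν (A ∩ {x | h ν x < n})) + ν {x | h ν x = ⊤} := by
        gcongr; exact measure_iUnion_le _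
    _ = 0 := by simp [key, hae]

lemma ball_eq_closedBall (ν : Measure ℝ) (hac : ν ≪ volume) (x r : ℝ) (hr : 0 < r) :
    ν (Metric.closedBall x r) = ν (Metric.ball x r) := by
  have hsub : Metric.closedBall x r \ Metric.ball x r ⊆ {x - r, x + r} := by
    intro y hy
    have h1 : dist y x = r := le_antisymm hy.1 (not_lt.1 hy.2)
    rw [Real.dist_eq] at h1
    rcases (abs_eq hr.le).1 h1 with h | h
    · have hy' : y = x + r := by linarith
      simp [hy']
    · have hy' : y = x - r := by linarith
      simp [hy']
  have hz : ν (Metric.closedBall x r \ Metric.ball x r) = 0 :=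
    measure_mono_null hsub (hac (((Set.finite_singleton _).insert _).measure_zero _))
  refine le_antisymm ?_ (measure_mono Metric.ball_subset_closedBall)
  calc ν (Metric.closedBall x r)
      = ν (Metric.ball x r ∪ Metric.closedBall x r \ Metric.ball x r) := by
        rw [Set.union_diff_cancel Metric.ball_subset_closedBall]
    _ ≤ ν (Metric.ball x r) + ν (Metric.closedBall x r \ Metric.ball x r) :=
        measure_union_le _ _
    _ = ν (Metric.ball x r) := by rw [hz, add_zero]

end Stmt5Aux





/-- Mattila-type differentiation: if the lower density of a finite Borel measure `ν`
on `ℝ` is `ν`-integrable, then `ν ≪ Leb`, the density `lim_{r↓0} ν(B_r(x))/(2r)`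
exists Lebesgue-a.e. and equals the Radon–Nikodym derivative, and
`∫ |dν/dLeb|² dLeb = ∫ D̲(ν,x) dν(x)`. -/
theorem stmt5 (ν : Measure ℝ) [IsFiniteMeasure ν]
    (hint : ∫⁻ x, Filter.liminf
        (fun r : ℝ => ν (Metric.ball x r) / ENNReal.ofReal (2 * r))
        (nhdsWithin 0 (Set.Ioi 0)) ∂ν ≠ ⊤) :
    ν ≪ volume ∧
    (∀ᵐ x ∂volume, Filter.Tendsto
        (fun r : ℝ => ν (Metric.ball x r) / ENNReal.ofReal (2 * r))
        (nhdsWithin 0 (Set.Ioi 0)) (nhds (ν.rnDeriv volume x))) ∧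
    ∫⁻ x, (ν.rnDeriv volume x) ^ 2 ∂volume
      = ∫⁻ x, Filter.liminf
          (fun r : ℝ => ν (Metric.ball x r) / ENNReal.ofReal (2 * r))
          (nhdsWithin 0 (Set.Ioi 0)) ∂ν := by
  have hint' : ∫⁻ x, Stmt5Aux.g ν x ∂ν ≠ ⊤ := hint
  have hac : ν ≪ volume := Stmt5Aux.ac ν hint'
  have hten : ∀ᵐ x ∂volume, Filter.Tendsto
      (fun r : ℝ => ν (Metric.ball x r) / ENNReal.ofReal (2 * r))
      (nhdsWithin 0 (Set.Ioi 0)) (nhds (ν.rnDeriv volume x)) := by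
    filter_upwards [Besicovitch.ae_tendsto_rnDeriv ν volume] with x hx
    refine hx.congr' ?_
    filter_upwards [self_mem_nhdsWithin] with r hr
    rw [Real.volume_closedBall, Stmt5Aux.ball_eq_closedBall ν hac x r hr]
  refine ⟨hac, hten, ?_⟩
  have hg : ∀ᵐ x ∂volume, Stmt5Aux.g ν x = ν.rnDeriv volume x := by
    filter_upwards [hten] with x hx
    exact hx.liminf_eq
  have hg' : ∀ᵐ x ∂ν, Stmt5Aux.g ν x = ν.rnDeriv volume x := hac.ae_le hg
  have hrn := Measure.measurable_rnDeriv ν volume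
  calc ∫⁻ x, (ν.rnDeriv volume x) ^ 2 ∂volume
      = ∫⁻ x, (ν.rnDeriv volume * ν.rnDeriv volume) x ∂volume := by
        simp only [Pi.mul_apply, pow_two]
    _ = ∫⁻ x, ν.rnDeriv volume x ∂(volume.withDensity (ν.rnDeriv volume)) :=
        (lintegral_withDensity_eq_lintegral_mul volume hrn hrn).symm
    _ = ∫⁻ x, ν.rnDeriv volume x ∂ν := by
        rw [Measure.withDensity_rnDeriv_eq ν volume hac]
    _ = ∫⁻ x, Stmt5Aux.g ν x ∂ν := (lintegral_congr_ae hg').symm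
    _ = _ := rfl
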